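/- Let E, A ∈ ℝ^{n×n} with A − sE regular, B ∈ ℝ^{n×m}, C ∈ ℝ^{p×n}, D ∈ ℝ^{p×m}; let E_r, A_r ∈ ℝ^{n_r×n_r} with E_r invertible and every complex root λ of det(A_r − λE_r) satisfying Re λ < 0, and B_r ∈ ℝ^{n_r×m}, F ∈ ℝ^{m×n}. Define the order-(n_r+n) descriptor realization E₂₂ := diag(E_r, E), A₂₂ := [[A_r, −B_rF],[0, A]], B₂₂ := [B_r; B], C₂₂ := [0, C], and let T₂₂ := C₂₂(sE₂₂ − A₂₂)^{−1}B₂₂ + D be its transfer function matrix. Suppose H ∈ ℝ^{n×p} is such that A + HC − sE is admissible and that A + BF − sE is admissible. Then the eight rational matrices defined by Ỹ^ε := F(sE − (A+HC))^{−1}(−B − HD) + I_m, X̃^ε := −F(sE − (A+HC))^{−1}H, Ñ^ε := C(sE − (A+HC))^{−1}(B + HD) + D, M̃^ε := C(sE − (A+HC))^{−1}H + I_p, M^ε := F(sE − (A+BF))^{−1}B + I_m, X^ε := −F(sE − (A+BF))^{−1}H, N^ε := (C + DF)(sE − (A+BF))^{−1}B + D, Y^ε := −(C + DF)(sE − (A+BF))^{−1}H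 + I_p form a doubly coprime factorization over RH∞ of T₂₂; in particular T₂₂ = C(sE − A)^{−1}B + D and the DCF is realized with descriptor realizations of the same order n as the network's model rather than order n_r + n. -/

import Mathlib

open Matrix Polynomial
open scoped Kronecker

set_option synthInstance.maxHeartbeats 400000
set_option maxHeartbeats 1000000

noncomputable section

/-- The field ℝ(s) of real rational functions. -/
abbrev RF := RatFunc ℝ

/-- A rational function is proper if the degree of its numerator (in lowest terms)
is at most the degree of its denominator. -/
def RFproper (f : RF) : Prop := f.num.degree ≤ f.denom.degree

/-- A rational function is stable: proper and every complex root of its denominator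
has strictly negative real part. -/
def RFstable (f : RF) : Prop :=
  RFproper f ∧ ∀ z : ℂ, Polynomial.aeval z f.denom = 0 → z.re < 0

/-- A rational matrix is stable (lies in RH∞) iff every entry is stable. -/
def MStable {p m : Type*} (G : Matrix p m RF) : Prop := ∀ i j, RFstable (G i j)

/-- A real matrix viewed as a matrix over ℝ(s). -/
def toRF {p m : Type*} (M : Matrix p m ℝ) : Matrix p m RF := M.map (algebraMap ℝ RF)

/-- A real matrix viewed as a matrix over ℂ. -/
def toC {p m : Type*} (M : Matrix p m ℝ) : Matrix p m ℂ := M.map (fun x => (x : ℂ))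

/-- The pencil A - s E as a matrix over ℝ(s). -/
def pencilRF {n : Type*} (A E : Matrix n n ℝ) : Matrix n n RF :=
  toRF A - (RatFunc.X : RF) • toRF E

/-- Admissible pencil: regular, every finite generalized eigenvalue in the open left
half-plane, and deg det(sE - A) = rank E (all infinite generalized eigenvalues have
partial multiplicity at most 1). -/
def Admissible {n : Type*} [Fintype n] [DecidableEq n] (A E : Matrix n n ℝ) : Prop :=
  (pencilRF A E).det ≠ 0 ∧
  (∀ z : ℂ, (toC A - z • toC E).det = 0 → z.re < 0) ∧
  (Matrix.of fun i j => Polynomial.X * Polynomial.C (E i j) - Polynomial.C (A i j)).det.natDegree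
    = E.rank

/-- Transfer function matrix C (sE - A)⁻¹ B + D of a descriptor realization. -/
def tfm {n p m : Type*} [Fintype n] [DecidableEq n] (E A : Matrix n n ℝ)
    (B : Matrix n m ℝ) (C : Matrix p n ℝ) (D : Matrix p m ℝ) : Matrix p m RF :=
  toRF C * ((RatFunc.X : RF) • toRF E - toRF A)⁻¹ * toRF B + toRF D

/-- (N, Ñ, M, M̃, X, X̃, Y, Ỹ) is a doubly coprime factorization of G over RH∞. -/
def IsDCF {p m : Type*} [Fintype p] [Fintype m] [DecidableEq p] [DecidableEq m]
    (G : Matrix p m RF)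
    (N : Matrix p m RF) (Ntil : Matrix p m RF)
    (M : Matrix m m RF) (Mtil : Matrix p p RF)
    (X : Matrix m p RF) (Xtil : Matrix m p RF)
    (Y : Matrix p p RF) (Ytil : Matrix m m RF) : Prop :=
  MStable N ∧ MStable Ntil ∧ MStable M ∧ MStable Mtil ∧
  MStable X ∧ MStable Xtil ∧ MStable Y ∧ MStable Ytil ∧
  M.det ≠ 0 ∧ Mtil.det ≠ 0 ∧ G = N * M⁻¹ ∧ G = Mtil⁻¹ * Ntil ∧
  Matrix.fromBlocks Ytil (-Xtil) (-Ntil) Mtil * Matrix.fromBlocks M X N Y = 1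

set_option maxHeartbeats 8000000
set_option synthInstance.maxHeartbeats 1000000

section AuxLemmas
variable {ν : ℕ}

lemma pencil_eq_map (A E : Matrix (Fin ν) (Fin ν) ℝ) :
    ((RatFunc.X : RF) • toRF E - toRF A) =
      (Matrix.of fun i j => Polynomial.X * Polynomial.C (E i j)
        - Polynomial.C (A i j)).map (algebraMap ℝ[X] RF) := by
  ext i j
  simp only [toRF, Matrix.map_apply, Matrix.sub_apply, Matrix.smul_apply, smul_eq_mul,
    Matrix.of_apply, _root_.map_sub, _root_.map_mul, RatFunc.algebraMap_X, RatFunc.algebraMap_C,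
    RatFunc.algebraMap_eq_C]
  try ring

lemma stable_of_div {r q : ℝ[X]} (hq : q ≠ 0) (hdeg : r.degree ≤ q.degree)
    (hroot : ∀ z : ℂ, aeval z q = 0 → z.re < 0) :
    RFstable (algebraMap ℝ[X] RF r / algebraMap ℝ[X] RF q) := by
  set f : RF := algebraMap ℝ[X] RF r / algebraMap ℝ[X] RF q with hf
  constructor
  · by_cases hr : r = 0
    · subst hr; simp only [map_zero, zero_div, hf, RFproper]
      simp [RatFunc.num_zero]
    · have hfne : f ≠ 0 := by
        apply div_ne_zero <;> exact RatFunc.algebraMap_ne_zero ‹_›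
      have h1 : f.num * q = r * f.denom := (RatFunc.num_mul_eq_mul_denom_iff hq).mpr hf
      have hnum : f.num ≠ 0 := RatFunc.num_ne_zero hfne
      have hden : f.denom ≠ 0 := f.denom_ne_zero
      have h2 : f.num.natDegree + q.natDegree = r.natDegree + f.denom.natDegree := by
        have := congrArg natDegree h1
        rwa [natDegree_mul hnum hq, natDegree_mul hr hden] at this
      have h3 : r.natDegree ≤ q.natDegree := natDegree_le_natDegree hdeg
      have h4 : f.num.natDegree ≤ f.denom.natDegree := by omega
      unfold RFproper
      rw [degree_eq_natDegree hnum, degree_eq_natDegree hden]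
      exact_mod_cast h4
  · intro z hz
    have hd : f.denom ∣ q := RatFunc.denom_div_dvd r q
    obtain ⟨t, ht⟩ := hd
    apply hroot z
    rw [ht]
    simp [hz]


lemma det_eq_zero_of_rows_from {k : ℕ} (M Q : Matrix (Fin k) (Fin k) ℝ)
    (s : Finset (Fin k)) (hcard : M.rank < s.card) (hQ : ∀ i ∈ s, Q i = M i) :
    Q.det = 0 := by
  apply (Matrix.detRowAlternating : (Fin k → ℝ) [⋀^Fin k]→ₗ[ℝ] ℝ).map_linearDependent
  intro hli
  have hsub : LinearIndependent ℝ (fun i : s => Q i) := hli.comp _ Subtype.val_injective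
  have he : (fun i : s => Q i) = (fun i : s => M i) := funext fun i => hQ i i.2
  have hsub' : LinearIndependent ℝ (fun i : s => M i) := he ▸ hsub
  have h1 : Fintype.card s = Module.finrank ℝ (Submodule.span ℝ (Set.range (fun i : s => M i))) :=
    linearIndependent_iff_card_eq_finrank_span.mp hsub' 
  have h2 : Submodule.span ℝ (Set.range (fun i : s => M i)) ≤ Submodule.span ℝ (Set.range M) := by
    apply Submodule.span_mono
    rintro _ ⟨i, rfl⟩; exact ⟨i, rfl⟩
  have h3 := Submodule.finrank_mono h2
  have h4 : M.rank = Module.finrank ℝ (Submodule.span ℝ (Set.range M)) := M.rank_eq_finrank_span_row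
  rw [← h1, ← h4] at h3
  simp only [Fintype.card_coe] at h3
  omega

lemma natDegree_det_pencil_le {k : ℕ} (M N : Matrix (Fin k) (Fin k) ℝ) :
    (Matrix.of fun i j => (X:ℝ[X]) * C (M i j) + C (N i j)).det.natDegree ≤ M.rank := by
  classical
  set a : Fin k → (Fin k → ℝ[X]) := fun i j => C (M i j) with ha
  set b : Fin k → (Fin k → ℝ[X]) := fun i j => C (N i j) with hb
  have hP : (Matrix.of fun i j => (X:ℝ[X]) * C (M i j) + C (N i j)) =
      (fun i => (X:ℝ[X]) • a i) + b := by
    ext i j; simp [ha, hb, Pi.smul_apply, smul_eq_mul]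
  rw [hP]
  show (((Matrix.detRowAlternating : (Fin k → ℝ[X]) [⋀^Fin k]→ₗ[ℝ[X]] ℝ[X]).toMultilinearMap)
      ((fun i => (X:ℝ[X]) • a i) + b)).natDegree ≤ M.rank
  rw [MultilinearMap.map_add_univ]
  apply natDegree_sum_le_of_forall_le
  intro s _
  have hpiece : s.piecewise (fun i => (X:ℝ[X]) • a i) b
      = s.piecewise (fun i => (X:ℝ[X]) • (s.piecewise a b) i) (s.piecewise a b) := by
    ext i j
    by_cases h : i ∈ s <;> simp [Finset.piecewise, h]
  rw [hpiece, MultilinearMap.map_piecewise_smul]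
  set Qs : Matrix (Fin k) (Fin k) ℝ := Matrix.of fun i j => if i ∈ s then M i j else N i j with hQs
  have hmat : s.piecewise a b = Qs.map C := by
    ext i j
    by_cases h : i ∈ s <;> simp [Finset.piecewise, h, hQs, ha, hb]
  have hdet : ((Matrix.detRowAlternating : (Fin k → ℝ[X]) [⋀^Fin k]→ₗ[ℝ[X]] ℝ[X]).toMultilinearMap)
      (s.piecewise a b) = C Qs.det := by
    rw [hmat]
    exact ((Polynomial.C : ℝ →+* ℝ[X]).map_det Qs).symm
  rw [hdet, Finset.prod_const, smul_eq_mul]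
  by_cases hc : s.card ≤ M.rank
  · calc ((X:ℝ[X])^s.card * C Qs.det).natDegree ≤ _ := natDegree_mul_le
      _ ≤ M.rank := by simp [natDegree_C]; omega
  · have : Qs.det = 0 := by
      apply det_eq_zero_of_rows_from M Qs s (by omega)
      intro i hi; ext j; simp [hQs, hi]
    simp [this]

lemma det_map_ne_zero {A E : Matrix (Fin ν) (Fin ν) ℝ} (hreg : (pencilRF A E).det ≠ 0) :
    (Matrix.of fun i j => Polynomial.X * Polynomial.C (E i j)
      - Polynomial.C (A i j)).det ≠ 0 := by
  intro h
  apply hreg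
  have h1 : pencilRF A E = -(((RatFunc.X : RF) • toRF E - toRF A)) := by
    unfold pencilRF; rw [neg_sub]
  rw [h1, Matrix.det_neg, pencil_eq_map A E, ← RingHom.mapMatrix_apply,
    ← RingHom.map_det, h, map_zero, mul_zero]

lemma adj_entry_natDegree_le (A E : Matrix (Fin ν) (Fin ν) ℝ) (a b : Fin ν) :
    ((Matrix.of fun i j => Polynomial.X * Polynomial.C (E i j)
      - Polynomial.C (A i j)).adjugate a b).natDegree ≤ E.rank := by
  rw [Matrix.adjugate_apply]
  have h1 : (Matrix.of fun i j => Polynomial.X * Polynomial.C (E i j)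
      - Polynomial.C (A i j)).updateRow b (Pi.single a 1) =
      Matrix.of fun i' j' => Polynomial.X * Polynomial.C ((E.updateRow b 0) i' j')
        + Polynomial.C ((Matrix.of fun i' j' => if i' = b then (if j' = a then (1:ℝ) else 0)
            else -A i' j') i' j') := by
    ext i' j'
    by_cases h : i' = b
    · subst h
      simp [Matrix.updateRow_apply, Pi.single_apply, apply_ite Polynomial.C]
    · simp [Matrix.updateRow_apply, h, sub_eq_add_neg]
  rw [h1]
  refine le_trans (natDegree_det_pencil_le _ _) ?_
  have h2 : E.updateRow b 0 =
      (Matrix.diagonal (fun i' => if i' = b then (0:ℝ) else 1)) * E := by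
    ext i' j'
    by_cases h : i' = b <;> simp [Matrix.updateRow_apply, Matrix.diagonal_mul, h]
  rw [h2]
  exact Matrix.rank_mul_le_right _ _

lemma stable_tfm {μ π ν : ℕ} (E A : Matrix (Fin ν) (Fin ν) ℝ)
    (B : Matrix (Fin ν) (Fin μ) ℝ) (C : Matrix (Fin π) (Fin ν) ℝ)
    (D : Matrix (Fin π) (Fin μ) ℝ) (hA : Admissible A E) :
    MStable (tfm E A B C D) := by
  obtain ⟨hreg, hroot, hdeg⟩ := hA
  set P : Matrix (Fin ν) (Fin ν) ℝ[X] :=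
    Matrix.of fun i j => Polynomial.X * Polynomial.C (E i j) - Polynomial.C (A i j) with hPdef
  set q : ℝ[X] := P.det with hqdef
  have hq0 : q ≠ 0 := det_map_ne_zero hreg
  set alg : ℝ[X] →+* RF := algebraMap ℝ[X] RF with halg
  have halgq : ((RatFunc.X : RF) • toRF E - toRF A).det = alg q := by
    rw [pencil_eq_map A E, ← RingHom.mapMatrix_apply, ← RingHom.map_det]
  have hinv : ((RatFunc.X : RF) • toRF E - toRF A)⁻¹ = (alg q)⁻¹ • (P.adjugate.map alg) := by
    rw [pencil_eq_map A E, Matrix.inv_def, ← RingHom.mapMatrix_apply, ← RingHom.map_det,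
      Ring.inverse_eq_inv', ← RingHom.map_adjugate, RingHom.mapMatrix_apply]
  intro i j
  set Cp : Matrix (Fin π) (Fin ν) ℝ[X] := C.map Polynomial.C with hCp
  set Bp : Matrix (Fin ν) (Fin μ) ℝ[X] := B.map Polynomial.C with hBp
  have hCmap : toRF C = Cp.map alg := by ext a b; simp [toRF, hCp, Matrix.map_apply]; rfl
  have hBmap : toRF B = Bp.map alg := by ext a b; simp [toRF, hBp, Matrix.map_apply]; rfl
  set num1 : ℝ[X] := (Cp * P.adjugate * Bp) i j with hnum1def
  set r : ℝ[X] := num1 + Polynomial.C (D i j) * q with hrdef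
  have hE : tfm E A B C D i j = alg r / alg q := by
    rw [tfm, hinv, hCmap, hBmap]
    rw [Matrix.mul_smul, Matrix.smul_mul, ← Matrix.map_mul, ← Matrix.map_mul]
    rw [Matrix.add_apply, Matrix.smul_apply, Matrix.map_apply, smul_eq_mul]
    have hD : toRF D i j = alg (Polynomial.C (D i j)) := by simp [toRF]; rfl
    rw [hD, hrdef, map_add, _root_.map_mul]
    have hqne : alg q ≠ 0 := RatFunc.algebraMap_ne_zero hq0
    field_simp
    try ring
  rw [hE]
  apply stable_of_div hq0
  · -- degree bound
    have hadj := adj_entry_natDegree_le A E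
    have hnum1 : num1.natDegree ≤ E.rank := by
      rw [hnum1def, Matrix.mul_apply]
      apply natDegree_sum_le_of_forall_le
      intro b _
      refine le_trans natDegree_mul_le ?_
      have h1 : ((Cp * P.adjugate) i b).natDegree ≤ E.rank := by
        rw [Matrix.mul_apply]
        apply natDegree_sum_le_of_forall_le
        intro a _
        simp only [hCp, Matrix.map_apply]
        exact le_trans (natDegree_C_mul_le _ _) (hadj a b)
      simpa [hBp, Matrix.map_apply, natDegree_C] using h1
    have hrq : r.natDegree ≤ q.natDegree := by
      rw [hrdef]
      refine le_trans (natDegree_add_le _ _) ?_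
      have h2 : (Polynomial.C (D i j) * q).natDegree ≤ q.natDegree := natDegree_C_mul_le _ _
      have h3 : q.natDegree = E.rank := hdeg
      omega
    calc r.degree ≤ (r.natDegree : WithBot ℕ) := degree_le_natDegree
      _ ≤ (q.natDegree : WithBot ℕ) := by exact_mod_cast hrq
      _ = q.degree := (degree_eq_natDegree hq0).symm
  · -- roots
    intro z hz
    apply hroot z
    have h1 : (Polynomial.aeval z : ℝ[X] →ₐ[ℝ] ℂ).toRingHom q =
        ((Polynomial.aeval z : ℝ[X] →ₐ[ℝ] ℂ).toRingHom.mapMatrix P).det :=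
      RingHom.map_det _ P
    have h2 : toC A - z • toC E =
        -((Polynomial.aeval z : ℝ[X] →ₐ[ℝ] ℂ).toRingHom.mapMatrix P) := by
      ext a b
      simp [toC, hPdef, Matrix.map_apply, Matrix.sub_apply, Matrix.smul_apply, smul_eq_mul,
        RingHom.mapMatrix_apply, Algebra.algebraMap_self]
      ring
    rw [h2, Matrix.det_neg, ← h1]
    simp only [AlgHom.toRingHom_eq_coe, RingHom.coe_coe] at hz ⊢
    rw [hz, mul_zero]

section toRFlemmas
variable {κ μ ν : Type*}

lemma toRF_add (M N : Matrix κ μ ℝ) : toRF (M + N) = toRF M + toRF N := by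
  ext i j; simp [toRF]

lemma toRF_neg (M : Matrix κ μ ℝ) : toRF (-M) = -toRF M := by
  ext i j; simp [toRF]

lemma toRF_zero : toRF (0 : Matrix κ μ ℝ) = 0 := by
  ext i j; simp [toRF]

lemma toRF_one [Fintype κ] [DecidableEq κ] : toRF (1 : Matrix κ κ ℝ) = 1 := by
  unfold toRF
  exact Matrix.map_one _ (map_zero _) (map_one _)

lemma toRF_mul [Fintype μ] (M : Matrix κ μ ℝ) (N : Matrix μ ν ℝ) :
    toRF (M * N) = toRF M * toRF N := by
  unfold toRF
  exact Matrix.map_mul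

lemma toRF_fromBlocks {κ' μ' : Type*} (M : Matrix κ μ ℝ) (N : Matrix κ μ' ℝ)
    (P : Matrix κ' μ ℝ) (Q : Matrix κ' μ' ℝ) :
    toRF (Matrix.fromBlocks M N P Q)
      = Matrix.fromBlocks (toRF M) (toRF N) (toRF P) (toRF Q) := by
  unfold toRF
  exact Matrix.fromBlocks_map _ _ _ _ _

lemma toRF_fromRows {κ' : Type*} (M : Matrix κ μ ℝ) (N : Matrix κ' μ ℝ) :
    toRF (Matrix.fromRows M N) = Matrix.fromRows (toRF M) (toRF N) := by
  ext (i | i) j <;> simp [toRF, Matrix.fromRows_apply_inl, Matrix.fromRows_apply_inr]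

lemma toRF_fromColumns {μ' : Type*} (M : Matrix κ μ ℝ) (N : Matrix κ μ' ℝ) :
    toRF (Matrix.fromCols M N) = Matrix.fromCols (toRF M) (toRF N) := by
  ext i (j | j) <;> simp [toRF, Matrix.fromCols, Matrix.fromCols_apply_inl, Matrix.fromCols_apply_inr]

end toRFlemmas

lemma det_pencil_ne_of_reg {ν : ℕ} {A E : Matrix (Fin ν) (Fin ν) ℝ}
    (h : (pencilRF A E).det ≠ 0) :
    ((RatFunc.X : RF) • toRF E - toRF A).det ≠ 0 := by
  intro h0
  apply h
  have h1 : pencilRF A E = -(((RatFunc.X : RF) • toRF E - toRF A)) := by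
    unfold pencilRF; rw [neg_sub]
  rw [h1, Matrix.det_neg, h0, mul_zero]

lemma det_pencil_ne_of_unit {k : ℕ} (Er Ar : Matrix (Fin k) (Fin k) ℝ)
    (hEr : IsUnit Er.det) :
    ((RatFunc.X : RF) • toRF Er - toRF Ar).det ≠ 0 := by
  have h1 : ((RatFunc.X : RF) • toRF Er - toRF Ar)
      = ((RatFunc.X : RF) • (1 : Matrix (Fin k) (Fin k) RF) - toRF (Ar * Er⁻¹)) * toRF Er := by
    rw [Matrix.sub_mul, Matrix.smul_mul, Matrix.one_mul, ← toRF_mul,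
      Matrix.nonsing_inv_mul_cancel_right _ _ hEr]
  have h2 : ((RatFunc.X : RF) • (1 : Matrix (Fin k) (Fin k) RF) - toRF (Ar * Er⁻¹))
      = (Matrix.charmatrix (Ar * Er⁻¹)).map (algebraMap ℝ[X] RF) := by
    ext i j
    rw [Matrix.map_apply, Matrix.sub_apply, Matrix.smul_apply, Matrix.one_apply]
    by_cases h : i = j
    · subst h
      rw [Matrix.charmatrix_apply_eq, map_sub, RatFunc.algebraMap_X, RatFunc.algebraMap_C,
        if_pos rfl, smul_eq_mul, mul_one]
      rfl
    · rw [Matrix.charmatrix_apply_ne _ _ _ h, map_neg, RatFunc.algebraMap_C, if_neg h,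
        smul_eq_mul, mul_zero, zero_sub]
      rfl
  rw [h1, Matrix.det_mul, h2]
  apply mul_ne_zero
  · rw [← RingHom.mapMatrix_apply, ← RingHom.map_det, ← Matrix.charpoly]
    exact RatFunc.algebraMap_ne_zero (Matrix.charpoly_monic _).ne_zero
  · rw [toRF, ← RingHom.mapMatrix_apply, ← RingHom.map_det]
    intro h0
    rw [show (0 : RF) = algebraMap ℝ RF 0 by simp] at h0
    exact hEr.ne_zero ((algebraMap ℝ RF).injective h0)

lemma fromBlocks_sub {l m n o α : Type*} [Sub α] (A : Matrix n l α) (B : Matrix n m α)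
    (C : Matrix o l α) (D : Matrix o m α) (A' : Matrix n l α) (B' : Matrix n m α)
    (C' : Matrix o l α) (D' : Matrix o m α) :
    Matrix.fromBlocks A B C D - Matrix.fromBlocks A' B' C' D' =
      Matrix.fromBlocks (A - A') (B - B') (C - C') (D - D') := by
  ext (i | i) (j | j) <;> simp [Matrix.fromBlocks]


section Abstract
set_option linter.unusedSectionVars false
variable {R : Type*} [CommRing R] {nn mm pp : Type*}
  [Fintype nn] [Fintype mm] [Fintype pp] [DecidableEq nn] [DecidableEq mm] [DecidableEq pp]

lemma dcf_key {kk : Type*} [Fintype kk]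
    (z u v : Matrix nn nn R) (b : Matrix nn mm R) (c : Matrix pp nn R)
    (f : Matrix mm nn R) (h : Matrix nn pp R)
    (hZFu1 : (z - b * f) * u = 1) (hvZH1 : v * (z - h * c) = 1)
    (W : Matrix nn kk R) :
    v * (h * (c * (u * W))) = v * (b * (f * (u * W))) + (v * W - u * W) := by
  have t1 : v * (z * (u * W)) - v * ((z - h * c) * (u * W))
      = v * (h * (c * (u * W))) := by
    rw [← Matrix.mul_sub, ← Matrix.sub_mul, sub_sub_cancel, Matrix.mul_assoc]
  have t2 : v * (z * (u * W)) - v * ((z - b * f) * (u * W))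
      = v * (b * (f * (u * W))) := by
    rw [← Matrix.mul_sub, ← Matrix.sub_mul, sub_sub_cancel, Matrix.mul_assoc]
  have t3 : v * ((z - h * c) * (u * W)) = u * W := by
    rw [← Matrix.mul_assoc, hvZH1, Matrix.one_mul]
  have t4 : v * ((z - b * f) * (u * W)) = v * W := by
    rw [← Matrix.mul_assoc (z - b * f) u W, hZFu1, Matrix.one_mul]
  rw [← t1, ← t2, t3, t4]
  abel

lemma dcf_keyZ {kk : Type*} [Fintype kk]
    (z u w : Matrix nn nn R) (b : Matrix nn mm R) (f : Matrix mm nn R)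
    (hwz : w * z = 1) (hZFu1 : (z - b * f) * u = 1)
    (W : Matrix nn kk R) :
    w * (b * (f * (u * W))) = u * W - w * W := by
  have t2 : w * (z * (u * W)) - w * ((z - b * f) * (u * W))
      = w * (b * (f * (u * W))) := by
    rw [← Matrix.mul_sub, ← Matrix.sub_mul, sub_sub_cancel, Matrix.mul_assoc]
  have t3 : w * (z * (u * W)) = u * W := by
    rw [← Matrix.mul_assoc, hwz, Matrix.one_mul]
  have t4 : w * ((z - b * f) * (u * W)) = w * W := by
    rw [← Matrix.mul_assoc (z - b * f) u W, hZFu1, Matrix.one_mul]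
  rw [← t2, t3, t4]

lemma dcf_keyZH {kk : Type*} [Fintype kk]
    (z v w : Matrix nn nn R) (c : Matrix pp nn R) (h : Matrix nn pp R)
    (hzw : z * w = 1) (hvZH1 : v * (z - h * c) = 1)
    (W : Matrix nn kk R) :
    v * (h * (c * (w * W))) = v * W - w * W := by
  have t1 : v * (z * (w * W)) - v * ((z - h * c) * (w * W))
      = v * (h * (c * (w * W))) := by
    rw [← Matrix.mul_sub, ← Matrix.sub_mul, sub_sub_cancel, Matrix.mul_assoc]
  have t3 : v * (z * (w * W)) = v * W := by
    rw [← Matrix.mul_assoc z w W, hzw, Matrix.one_mul]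
  have t4 : v * ((z - h * c) * (w * W)) = w * W := by
    rw [← Matrix.mul_assoc, hvZH1, Matrix.one_mul]
  rw [← t1, t3, t4]

lemma dcf_GM (z u w : Matrix nn nn R) (b : Matrix nn mm R) (c : Matrix pp nn R)
    (d : Matrix pp mm R) (f : Matrix mm nn R)
    (hwz : w * z = 1) (hZFu1 : (z - b * f) * u = 1) :
    (c * w * b + d) * (f * u * b + 1) = (c + d * f) * u * b + d := by
  simp only [Matrix.mul_add, Matrix.add_mul, Matrix.mul_sub, Matrix.sub_mul,
    Matrix.mul_assoc, Matrix.mul_one, Matrix.one_mul]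
  rw [dcf_keyZ z u w b f hwz hZFu1 b]
  simp only [Matrix.mul_add, Matrix.mul_sub]
  abel

lemma dcf_MtG (z v w : Matrix nn nn R) (b : Matrix nn mm R) (c : Matrix pp nn R)
    (d : Matrix pp mm R) (h : Matrix nn pp R)
    (hzw : z * w = 1) (hvZH1 : v * (z - h * c) = 1) :
    (c * v * h + 1) * (c * w * b + d) = c * v * (b + h * d) + d := by
  simp only [Matrix.mul_add, Matrix.add_mul, Matrix.mul_sub, Matrix.sub_mul,
    Matrix.mul_assoc, Matrix.mul_one, Matrix.one_mul]
  rw [dcf_keyZH z v w c h hzw hvZH1 b]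
  simp only [Matrix.mul_add, Matrix.mul_sub]
  abel

lemma dcf_bezout (z u v : Matrix nn nn R) (b : Matrix nn mm R) (c : Matrix pp nn R)
    (d : Matrix pp mm R) (f : Matrix mm nn R) (h : Matrix nn pp R)
    (hZFu1 : (z - b * f) * u = 1) (hvZH1 : v * (z - h * c) = 1) :
    Matrix.fromBlocks (f * v * -(b + h * d) + 1) (-(-f * v * h))
        (-(c * v * (b + h * d) + d)) (c * v * h + 1) *
      Matrix.fromBlocks (f * u * b + 1) (-f * u * h)
        ((c + d * f) * u * b + d) (-(c + d * f) * u * h + 1) = 1 := by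
  have keyb := dcf_key z u v b c f h hZFu1 hvZH1 b
  have keyh := dcf_key z u v b c f h hZFu1 hvZH1 h
  rw [Matrix.fromBlocks_multiply]
  have e11 : (f * v * -(b + h * d) + 1) * (f * u * b + 1)
      + -(-f * v * h) * ((c + d * f) * u * b + d) = 1 := by
    simp only [Matrix.mul_add, Matrix.add_mul, Matrix.mul_sub, Matrix.sub_mul,
      Matrix.mul_assoc, Matrix.mul_one, Matrix.one_mul, Matrix.neg_mul, Matrix.mul_neg,
      neg_neg, neg_add_rev]
    rw [keyb]
    simp only [Matrix.mul_add, Matrix.mul_sub]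
    abel
  have e12 : (f * v * -(b + h * d) + 1) * (-f * u * h)
      + -(-f * v * h) * (-(c + d * f) * u * h + 1) = 0 := by
    simp only [Matrix.mul_add, Matrix.add_mul, Matrix.mul_sub, Matrix.sub_mul,
      Matrix.mul_assoc, Matrix.mul_one, Matrix.one_mul, Matrix.neg_mul, Matrix.mul_neg,
      neg_neg, neg_add_rev]
    rw [keyh]
    simp only [Matrix.mul_add, Matrix.mul_sub]
    abel
  have e21 : -(c * v * (b + h * d) + d) * (f * u * b + 1)
      + (c * v * h + 1) * ((c + d * f) * u * b + d) = 0 := by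
    simp only [Matrix.mul_add, Matrix.add_mul, Matrix.mul_sub, Matrix.sub_mul,
      Matrix.mul_assoc, Matrix.mul_one, Matrix.one_mul, Matrix.neg_mul, Matrix.mul_neg,
      neg_neg, neg_add_rev]
    rw [keyb]
    simp only [Matrix.mul_add, Matrix.mul_sub]
    abel
  have e22 : -(c * v * (b + h * d) + d) * (-f * u * h)
      + (c * v * h + 1) * (-(c + d * f) * u * h + 1) = 1 := by
    simp only [Matrix.mul_add, Matrix.add_mul, Matrix.mul_sub, Matrix.sub_mul,
      Matrix.mul_assoc, Matrix.mul_one, Matrix.one_mul, Matrix.neg_mul, Matrix.mul_neg,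
      neg_neg, neg_add_rev]
    rw [keyh]
    simp only [Matrix.mul_add, Matrix.mul_sub]
    abel
  rw [e11, e12, e21, e22, Matrix.fromBlocks_one]

end Abstract


end AuxLemmas

lemma part1_lemma {n nr m p : ℕ} (E A : Matrix (Fin n) (Fin n) ℝ)
    (hreg : (pencilRF A E).det ≠ 0)
    (B : Matrix (Fin n) (Fin m) ℝ) (C : Matrix (Fin p) (Fin n) ℝ)
    (D : Matrix (Fin p) (Fin m) ℝ)
    (Er Ar : Matrix (Fin nr) (Fin nr) ℝ) (hEr : IsUnit Er.det)
    (Br : Matrix (Fin nr) (Fin m) ℝ) (F : Matrix (Fin m) (Fin n) ℝ) :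
    tfm (Matrix.fromBlocks Er 0 0 E) (Matrix.fromBlocks Ar (-(Br * F)) 0 A)
      (Matrix.fromRows Br B) (Matrix.fromCols 0 C) D = tfm E A B C D := by
  have hZu' : IsUnit ((RatFunc.X : RF) • toRF E - toRF A).det :=
    isUnit_iff_ne_zero.mpr (det_pencil_ne_of_reg hreg)
  have hRdet : ((RatFunc.X : RF) • toRF Er - toRF Ar).det ≠ 0 := det_pencil_ne_of_unit Er Ar hEr
  have hRu : IsUnit ((RatFunc.X : RF) • toRF Er - toRF Ar).det := isUnit_iff_ne_zero.mpr hRdet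
  rw [tfm, tfm]
  have hW : (RatFunc.X : RF) • toRF (Matrix.fromBlocks Er 0 0 E)
      - toRF (Matrix.fromBlocks Ar (-(Br * F)) 0 A)
      = Matrix.fromBlocks ((RatFunc.X : RF) • toRF Er - toRF Ar) (toRF Br * toRF F) 0
          ((RatFunc.X : RF) • toRF E - toRF A) := by
    rw [toRF_fromBlocks, toRF_fromBlocks, Matrix.fromBlocks_smul, fromBlocks_sub]
    simp only [toRF_zero, toRF_neg, toRF_mul, smul_zero, zero_sub, neg_neg, sub_zero]
  rw [hW]
  have e11 : ((RatFunc.X : RF) • toRF Er - toRF Ar)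
      * ((RatFunc.X : RF) • toRF Er - toRF Ar)⁻¹ + (toRF Br * toRF F) * (0 : Matrix (Fin n) (Fin nr) RF) = 1 := by
    rw [Matrix.mul_nonsing_inv _ hRu, Matrix.mul_zero, add_zero]
  have e12 : ((RatFunc.X : RF) • toRF Er - toRF Ar)
        * -(((RatFunc.X : RF) • toRF Er - toRF Ar)⁻¹ * (toRF Br * toRF F)
            * ((RatFunc.X : RF) • toRF E - toRF A)⁻¹)
      + (toRF Br * toRF F) * ((RatFunc.X : RF) • toRF E - toRF A)⁻¹ = 0 := by
    rw [Matrix.mul_neg, ← Matrix.mul_assoc, ← Matrix.mul_assoc,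
      Matrix.mul_nonsing_inv _ hRu, Matrix.one_mul, Matrix.mul_assoc, neg_add_cancel]
  have e21 : (0 : Matrix (Fin n) (Fin nr) RF) * ((RatFunc.X : RF) • toRF Er - toRF Ar)⁻¹
      + ((RatFunc.X : RF) • toRF E - toRF A) * (0 : Matrix (Fin n) (Fin nr) RF) = 0 := by
    rw [Matrix.zero_mul, Matrix.mul_zero, add_zero]
  have e22 : (0 : Matrix (Fin n) (Fin nr) RF)
        * -(((RatFunc.X : RF) • toRF Er - toRF Ar)⁻¹ * (toRF Br * toRF F)
            * ((RatFunc.X : RF) • toRF E - toRF A)⁻¹)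
      + ((RatFunc.X : RF) • toRF E - toRF A) * ((RatFunc.X : RF) • toRF E - toRF A)⁻¹ = 1 := by
    rw [Matrix.zero_mul, Matrix.mul_nonsing_inv _ hZu', zero_add]
  have hWinv : (Matrix.fromBlocks ((RatFunc.X : RF) • toRF Er - toRF Ar)
        (toRF Br * toRF F) 0 ((RatFunc.X : RF) • toRF E - toRF A))⁻¹
      = Matrix.fromBlocks ((RatFunc.X : RF) • toRF Er - toRF Ar)⁻¹
          (-(((RatFunc.X : RF) • toRF Er - toRF Ar)⁻¹ * (toRF Br * toRF F)
              * ((RatFunc.X : RF) • toRF E - toRF A)⁻¹))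
          0 ((RatFunc.X : RF) • toRF E - toRF A)⁻¹ := by
    apply Matrix.inv_eq_right_inv
    rw [Matrix.fromBlocks_multiply, e11, e12, e21, e22, Matrix.fromBlocks_one]
  rw [hWinv, toRF_fromColumns, toRF_zero, toRF_fromRows,
    Matrix.fromCols_mul_fromBlocks, Matrix.fromCols_mul_fromRows]
  simp only [Matrix.zero_mul, Matrix.mul_zero, add_zero, zero_add]

/-- a doubly coprime factorization of the composite (2,2)-block T₂₂,
realized with descriptor realizations of the same order n as the network's model
rather than order n_r + n; in particular T₂₂ = C(sE - A)⁻¹B + D. -/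
theorem stmt_14 {n nr m p : ℕ} (E A : Matrix (Fin n) (Fin n) ℝ)
    (hreg : (pencilRF A E).det ≠ 0)
    (B : Matrix (Fin n) (Fin m) ℝ) (C : Matrix (Fin p) (Fin n) ℝ)
    (D : Matrix (Fin p) (Fin m) ℝ)
    (Er Ar : Matrix (Fin nr) (Fin nr) ℝ) (hEr : IsUnit Er.det)
    (hAr : ∀ z : ℂ, (toC Ar - z • toC Er).det = 0 → z.re < 0)
    (Br : Matrix (Fin nr) (Fin m) ℝ) (F : Matrix (Fin m) (Fin n) ℝ)
    (E₂₂ : Matrix (Fin nr ⊕ Fin n) (Fin nr ⊕ Fin n) ℝ)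
    (hE₂₂ : E₂₂ = Matrix.fromBlocks Er 0 0 E)
    (A₂₂ : Matrix (Fin nr ⊕ Fin n) (Fin nr ⊕ Fin n) ℝ)
    (hA₂₂ : A₂₂ = Matrix.fromBlocks Ar (-(Br * F)) 0 A)
    (B₂₂ : Matrix (Fin nr ⊕ Fin n) (Fin m) ℝ) (hB₂₂ : B₂₂ = Matrix.fromRows Br B)
    (C₂₂ : Matrix (Fin p) (Fin nr ⊕ Fin n) ℝ) (hC₂₂ : C₂₂ = Matrix.fromCols 0 C)
    (T₂₂ : Matrix (Fin p) (Fin m) RF) (hT₂₂ : T₂₂ = tfm E₂₂ A₂₂ B₂₂ C₂₂ D)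
    (H : Matrix (Fin n) (Fin p) ℝ) (hH : Admissible (A + H * C) E)
    (hF : Admissible (A + B * F) E) :
    T₂₂ = tfm E A B C D ∧
    IsDCF T₂₂
      -- N^ε  := (C + DF)(sE - (A+BF))⁻¹B + D
      (tfm E (A + B * F) B (C + D * F) D)
      -- Ñ^ε  := C(sE - (A+HC))⁻¹(B + HD) + D
      (tfm E (A + H * C) (B + H * D) C D)
      -- M^ε  := F(sE - (A+BF))⁻¹B + I
      (tfm E (A + B * F) B F 1)
      -- M̃^ε  := C(sE - (A+HC))⁻¹H + I
      (tfm E (A + H * C) H C 1)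
      -- X^ε  := -F(sE - (A+BF))⁻¹H
      (tfm E (A + B * F) H (-F) 0)
      -- X̃^ε  := -F(sE - (A+HC))⁻¹H
      (tfm E (A + H * C) H (-F) 0)
      -- Y^ε  := -(C + DF)(sE - (A+BF))⁻¹H + I
      (tfm E (A + B * F) H (-(C + D * F)) 1)
      -- Ỹ^ε  := F(sE - (A+HC))⁻¹(-B - HD) + I
      (tfm E (A + H * C) (-(B + H * D)) F 1) := by
  -- abbreviations
  set bb : Matrix (Fin n) (Fin m) RF := toRF B with hbb
  set cc : Matrix (Fin p) (Fin n) RF := toRF C with hcc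
  set dd : Matrix (Fin p) (Fin m) RF := toRF D with hdd
  set ff : Matrix (Fin m) (Fin n) RF := toRF F with hff
  set hhh : Matrix (Fin n) (Fin p) RF := toRF H with hhhh
  set Z : Matrix (Fin n) (Fin n) RF := (RatFunc.X : RF) • toRF E - toRF A with hZ
  have hZdet : Z.det ≠ 0 := det_pencil_ne_of_reg hreg
  have hZu : IsUnit Z.det := isUnit_iff_ne_zero.mpr hZdet
  -- the two shifted pencils
  have hZF_eq : ((RatFunc.X : RF) • toRF E - toRF (A + B * F)) = Z - bb * ff := by
    rw [toRF_add, toRF_mul, hZ, sub_add_eq_sub_sub]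
  have hZH_eq : ((RatFunc.X : RF) • toRF E - toRF (A + H * C)) = Z - hhh * cc := by
    rw [toRF_add, toRF_mul, hZ, sub_add_eq_sub_sub]
  have hdZF : (Z - bb * ff).det ≠ 0 := by
    have := det_pencil_ne_of_reg hF.1; rwa [hZF_eq] at this
  have hdZH : (Z - hhh * cc).det ≠ 0 := by
    have := det_pencil_ne_of_reg hH.1; rwa [hZH_eq] at this
  have hZFu : IsUnit (Z - bb * ff).det := isUnit_iff_ne_zero.mpr hdZF
  have hZHu : IsUnit (Z - hhh * cc).det := isUnit_iff_ne_zero.mpr hdZH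
  set u : Matrix (Fin n) (Fin n) RF := (Z - bb * ff)⁻¹ with hu
  set v : Matrix (Fin n) (Fin n) RF := (Z - hhh * cc)⁻¹ with hv
  have hZFu1 : (Z - bb * ff) * u = 1 := Matrix.mul_nonsing_inv _ hZFu
  have huZF1 : u * (Z - bb * ff) = 1 := Matrix.nonsing_inv_mul _ hZFu
  have hZHv1 : (Z - hhh * cc) * v = 1 := Matrix.mul_nonsing_inv _ hZHu
  have hvZH1 : v * (Z - hhh * cc) = 1 := Matrix.nonsing_inv_mul _ hZHu
  -- formulas for the eight matrices
  have eN : tfm E (A + B * F) B (C + D * F) D = (cc + dd * ff) * u * bb + dd := by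
    rw [tfm, hZF_eq, toRF_add, toRF_mul, ← hu, ← hbb, ← hcc, ← hdd, ← hff]
  have eNt : tfm E (A + H * C) (B + H * D) C D = cc * v * (bb + hhh * dd) + dd := by
    rw [tfm, hZH_eq, toRF_add, toRF_mul, ← hv, ← hbb, ← hcc, ← hdd, ← hhhh]
  have eM : tfm E (A + B * F) B F 1 = ff * u * bb + 1 := by
    rw [tfm, hZF_eq, toRF_one, ← hu, ← hbb, ← hff]
  have eMt : tfm E (A + H * C) H C 1 = cc * v * hhh + 1 := by
    rw [tfm, hZH_eq, toRF_one, ← hv, ← hcc, ← hhhh]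
  have eX : tfm E (A + B * F) H (-F) 0 = (-ff) * u * hhh := by
    rw [tfm, hZF_eq, toRF_neg, toRF_zero, ← hu, ← hff, ← hhhh, add_zero]
  have eXt : tfm E (A + H * C) H (-F) 0 = (-ff) * v * hhh := by
    rw [tfm, hZH_eq, toRF_neg, toRF_zero, ← hv, ← hff, ← hhhh, add_zero]
  have eY : tfm E (A + B * F) H (-(C + D * F)) 1 = (-(cc + dd * ff)) * u * hhh + 1 := by
    rw [tfm, hZF_eq, toRF_neg, toRF_add, toRF_mul, toRF_one, ← hu, ← hcc, ← hdd, ← hff, ← hhhh]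
  have eYt : tfm E (A + H * C) (-(B + H * D)) F 1 = ff * v * (-(bb + hhh * dd)) + 1 := by
    rw [tfm, hZH_eq, toRF_neg, toRF_add, toRF_mul, toRF_one, ← hv, ← hbb, ← hdd, ← hff, ← hhhh]
  -- part 1 : composite transfer function
  have hZu' : IsUnit ((RatFunc.X : RF) • toRF E - toRF A).det := by rw [← hZ]; exact hZu
  have hRdet : ((RatFunc.X : RF) • toRF Er - toRF Ar).det ≠ 0 := det_pencil_ne_of_unit Er Ar hEr
  have hRu : IsUnit ((RatFunc.X : RF) • toRF Er - toRF Ar).det := isUnit_iff_ne_zero.mpr hRdet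
  have part1 : T₂₂ = tfm E A B C D := by
    rw [hT₂₂, hE₂₂, hA₂₂, hB₂₂, hC₂₂]
    exact part1_lemma E A hreg B C D Er Ar hEr Br F
  -- determinant facts
  have hdetM : (ff * u * bb + 1).det ≠ 0 := by
    have h1 : ff * u * bb + 1 = 1 + ff * (u * bb) := by
      rw [add_comm, Matrix.mul_assoc]
    have h2 : (Z - bb * ff) * (1 + u * bb * ff) = Z := by
      rw [Matrix.mul_add, Matrix.mul_one, ← Matrix.mul_assoc, ← Matrix.mul_assoc,
        hZFu1, Matrix.one_mul, sub_add_cancel]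
    have h3 := congrArg Matrix.det h2
    rw [Matrix.det_mul] at h3
    rw [h1, Matrix.det_one_add_mul_comm]
    intro h0
    rw [h0, mul_zero] at h3
    exact hZdet h3.symm
  have hdetMt : (cc * v * hhh + 1).det ≠ 0 := by
    have h1 : cc * v * hhh + 1 = 1 + cc * (v * hhh) := by
      rw [add_comm, Matrix.mul_assoc]
    have h2 : (Z - hhh * cc) * (1 + v * hhh * cc) = Z := by
      rw [Matrix.mul_add, Matrix.mul_one, ← Matrix.mul_assoc, ← Matrix.mul_assoc,
        hZHv1, Matrix.one_mul, sub_add_cancel]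
    have h3 := congrArg Matrix.det h2
    rw [Matrix.det_mul] at h3
    rw [h1, Matrix.det_one_add_mul_comm]
    intro h0
    rw [h0, mul_zero] at h3
    exact hZdet h3.symm
  have eG : tfm E A B C D = cc * Z⁻¹ * bb + dd := by
    rw [tfm, ← hZ, ← hbb, ← hcc, ← hdd]
  have hwz : Z⁻¹ * Z = 1 := Matrix.nonsing_inv_mul _ hZu
  have hzw : Z * Z⁻¹ = 1 := Matrix.mul_nonsing_inv _ hZu
  refine ⟨part1, ?_, ?_, ?_, ?_, ?_, ?_, ?_, ?_, ?_, ?_, ?_, ?_, ?_⟩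
  · exact stable_tfm _ _ _ _ _ hF
  · exact stable_tfm _ _ _ _ _ hH
  · exact stable_tfm _ _ _ _ _ hF
  · exact stable_tfm _ _ _ _ _ hH
  · exact stable_tfm _ _ _ _ _ hF
  · exact stable_tfm _ _ _ _ _ hH
  · exact stable_tfm _ _ _ _ _ hF
  · exact stable_tfm _ _ _ _ _ hH
  · rw [eM]; exact hdetM
  · rw [eMt]; exact hdetMt
  · rw [part1, eG, eN, eM, ← dcf_GM Z u Z⁻¹ bb cc dd ff hwz hZFu1,
      Matrix.mul_nonsing_inv_cancel_right _ _ (isUnit_iff_ne_zero.mpr hdetM)]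
  · rw [part1, eG, eNt, eMt, ← dcf_MtG Z v Z⁻¹ bb cc dd hhh hzw hvZH1,
      Matrix.nonsing_inv_mul_cancel_left _ _ (isUnit_iff_ne_zero.mpr hdetMt)]
  · rw [eN, eNt, eM, eMt, eX, eXt, eY, eYt]
    exact dcf_bezout Z u v bb cc dd ff hhh hZFu1 hvZH1

end
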